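/- Let (Ω, 𝒜, P) be a probability space, let d, M ≥ 1, τ ≥ 1, μ > 0, G ≥ 0, 0 < η ≤ 1, and let w_1, …, w_M be nonnegative reals with Σ_m w_m = 1. Let F_m : ℝ^d → ℝ and G_m : ℝ^d → ℝ^d satisfy the μ-strong-convexity inequality 2(F_m(v) − F_m(w)) ≥ 2⟨v − w, G_m(w)⟩ + μ‖v − w‖² for all v, w ∈ ℝ^d and all m; set F = Σ_m w_m F_m, let θ* be a global minimizer of F with F* = F(θ*), suppose F_m* ≤ F_m(v) for all v and m, and set Γ = F* − Σ_m w_m F_m*. Let θ̂ : Ω → ℝ^d and g_{m,i} : Ω → ℝ^d (i ∈ {1,…,τ}) be random vectors (all integrands appearing below integrable) with E[‖g_{m,i}‖²] ≤ G², define the local iterates θ_m^i = θ̂ − η Σ_{j=1}^{i−1} g_{m,j}, and assume the unbiasedness identities E[⟨θ* − θ_m^i, g_{m,i}⟩] = E[⟨θ* − θ_m^i, G_m(θ_m^i)⟩] for all m and all i ∈ {2,…,τ}. Then: 2η Σ_{m=1}^M w_m Σ_{i=2}^τ E[⟨θ* − θ̂, g_{m,i}⟩] ≤ −μη(1 − η)(τ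 − 1) E[‖θ̂ − θ*‖²] + η²(τ − 1)G² + (1 + μ(1 − η)) η² G² τ(τ−1)(2τ−1)/6 + 2η(τ − 1)Γ. -/

import Mathlib

open MeasureTheory Finset
open scoped InnerProductSpace

/-- Lemma 2 of the paper, bounding the cross term
2η Σ_m w_m Σ_{i=2}^τ E⟨θ* − θ̂, g_{m,i}⟩. -/

lemma sumsq_icc (n : ℕ) :
    ∑ i ∈ Icc 2 n, ((i : ℝ) - 1) ^ 2
      = (n : ℝ) * ((n : ℝ) - 1) * (2 * (n : ℝ) - 1) / 6 := by
  induction n with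
  | zero => simp
  | succ k ih =>
    rcases Nat.eq_zero_or_pos k with hk | hk
    · subst hk; simp
    · rw [Finset.sum_Icc_succ_top (by omega : 2 ≤ k + 1), ih]
      push_cast
      ring

set_option maxHeartbeats 1600000 in
theorem stmt_15 {Ω : Type*} [MeasurableSpace Ω] (P : Measure Ω) [IsProbabilityMeasure P]
    (d M τ : ℕ) (hd : 1 ≤ d) (hM : 1 ≤ M) (hτ : 1 ≤ τ)
    (μ G η : ℝ) (hμ : 0 < μ) (hG : 0 ≤ G) (hη0 : 0 < η) (hη1 : η ≤ 1)
    (w : Fin M → ℝ) (hw : ∀ m, 0 ≤ w m) (hw1 : ∑ m, w m = 1)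
    (F : Fin M → EuclideanSpace ℝ (Fin d) → ℝ)
    (Gm : Fin M → EuclideanSpace ℝ (Fin d) → EuclideanSpace ℝ (Fin d))
    (hsc : ∀ m (v u : EuclideanSpace ℝ (Fin d)),
      2 * (F m v - F m u) ≥ 2 * ⟪v - u, Gm m u⟫_ℝ + μ * ‖v - u‖ ^ 2)
    (θstar : EuclideanSpace ℝ (Fin d))
    (hmin : ∀ v, ∑ m, w m * F m θstar ≤ ∑ m, w m * F m v)
    (Fmin : Fin M → ℝ) (hFmin : ∀ m v, Fmin m ≤ F m v)
    (Fstar Γ : ℝ) (hFstar : Fstar = ∑ m, w m * F m θstar)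
    (hΓ : Γ = Fstar - ∑ m, w m * Fmin m)
    (θh : Ω → EuclideanSpace ℝ (Fin d))
    (g : Fin M → ℕ → Ω → EuclideanSpace ℝ (Fin d))
    -- local SGD iterates: θ_m^i = θ̂ − η Σ_{j=1}^{i−1} g_{m,j}
    (θloc : Fin M → ℕ → Ω → EuclideanSpace ℝ (Fin d))
    (hθloc : ∀ m i ω, θloc m i ω = θh ω - η • ∑ j ∈ Icc 1 (i - 1), g m j ω)
    -- integrability of all integrands appearing below
    (hθhint : Integrable θh P)
    (hgint : ∀ m, ∀ i ∈ Icc 1 τ, Integrable (fun ω => g m i ω) P)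
    (hg2int : ∀ m, ∀ i ∈ Icc 1 τ, Integrable (fun ω => ‖g m i ω‖ ^ 2) P)
    (hθh2int : Integrable (fun ω => ‖θh ω - θstar‖ ^ 2) P)
    (hip0int : ∀ m, ∀ i ∈ Icc 2 τ,
      Integrable (fun ω => ⟪θstar - θh ω, g m i ω⟫_ℝ) P)
    (hip1int : ∀ m, ∀ i ∈ Icc 2 τ,
      Integrable (fun ω => ⟪θstar - θloc m i ω, g m i ω⟫_ℝ) P)
    (hip2int : ∀ m, ∀ i ∈ Icc 2 τ,
      Integrable (fun ω => ⟪θstar - θloc m i ω, Gm m (θloc m i ω)⟫_ℝ) P)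
    (hloc2int : ∀ m, ∀ i ∈ Icc 2 τ,
      Integrable (fun ω => ‖θloc m i ω - θstar‖ ^ 2) P)
    -- bounded second moments of the stochastic gradients
    (hgbound : ∀ m, ∀ i ∈ Icc 1 τ, ∫ ω, ‖g m i ω‖ ^ 2 ∂P ≤ G ^ 2)
    -- unbiasedness identities
    (hunbiased : ∀ m, ∀ i ∈ Icc 2 τ,
      ∫ ω, ⟪θstar - θloc m i ω, g m i ω⟫_ℝ ∂P
        = ∫ ω, ⟪θstar - θloc m i ω, Gm m (θloc m i ω)⟫_ℝ ∂P) :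
    2 * η * ∑ m, w m * ∑ i ∈ Icc 2 τ, ∫ ω, ⟪θstar - θh ω, g m i ω⟫_ℝ ∂P
      ≤ -(μ * η * (1 - η) * ((τ : ℝ) - 1)) * ∫ ω, ‖θh ω - θstar‖ ^ 2 ∂P
        + η ^ 2 * ((τ : ℝ) - 1) * G ^ 2
        + (1 + μ * (1 - η)) * η ^ 2 * G ^ 2
            * ((τ : ℝ) * ((τ : ℝ) - 1) * (2 * (τ : ℝ) - 1) / 6)
        + 2 * η * ((τ : ℝ) - 1) * Γ := by

  set D : ℝ := ∫ ω, ‖θh ω - θstar‖ ^ 2 ∂P with hD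
  -- key per-(m,i) bound
  have key : ∀ m, ∀ i ∈ Icc 2 τ,
      2 * η * (∫ ω, ⟪θstar - θh ω, g m i ω⟫_ℝ ∂P)
        ≤ 2 * η * (F m θstar - Fmin m) - μ * η * (1 - η) * D
            + (1 + μ * (1 - η)) * η ^ 2 * ((i : ℝ) - 1) ^ 2 * G ^ 2
            + η ^ 2 * G ^ 2 := by
    intro m i hi
    simp only [Finset.mem_Icc] at hi
    obtain ⟨hi2, hiτ⟩ := hi
    have hiIcc2 : i ∈ Icc 2 τ := Finset.mem_Icc.mpr ⟨hi2, hiτ⟩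
    have hiIcc1 : i ∈ Icc 1 τ := Finset.mem_Icc.mpr ⟨by omega, hiτ⟩
    have hsub : Icc 1 (i - 1) ⊆ Icc 1 τ := Finset.Icc_subset_Icc le_rfl (by omega)
    set S : Ω → EuclideanSpace ℝ (Fin d) := fun ω => ∑ j ∈ Icc 1 (i - 1), g m j ω with hS
    have hΔ : ∀ ω, θloc m i ω - θh ω = -(η • S ω) := by
      intro ω; rw [hθloc]; abel
    have hcard : (#(Icc 1 (i - 1)) : ℝ) = (i : ℝ) - 1 := by
      rw [Nat.card_Icc]
      have h : i - 1 + 1 - 1 = i - 1 := by omega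
      rw [h, Nat.cast_sub (by omega : 1 ≤ i), Nat.cast_one]
    have hSint : Integrable S P :=
      integrable_finset_sum _ (fun j hj => hgint m j (hsub hj))
    have hSptw : ∀ ω, ‖S ω‖ ^ 2 ≤ ((i : ℝ) - 1) * ∑ j ∈ Icc 1 (i - 1), ‖g m j ω‖ ^ 2 := by
      intro ω
      have h1 : ‖S ω‖ ≤ ∑ j ∈ Icc 1 (i - 1), ‖g m j ω‖ := norm_sum_le _ _
      have h2 : (∑ j ∈ Icc 1 (i - 1), ‖g m j ω‖) ^ 2
          ≤ (#(Icc 1 (i - 1)) : ℝ) * ∑ j ∈ Icc 1 (i - 1), ‖g m j ω‖ ^ 2 :=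
        sq_sum_le_card_mul_sum_sq
      calc ‖S ω‖ ^ 2 ≤ (∑ j ∈ Icc 1 (i - 1), ‖g m j ω‖) ^ 2 :=
            pow_le_pow_left₀ (norm_nonneg _) h1 2
        _ ≤ _ := by rw [← hcard]; exact h2
    have hsum2int : Integrable (fun ω => ∑ j ∈ Icc 1 (i - 1), ‖g m j ω‖ ^ 2) P :=
      integrable_finset_sum _ (fun j hj => hg2int m j (hsub hj))
    have hS2int : Integrable (fun ω => ‖S ω‖ ^ 2) P := by
      apply Integrable.mono' (hsum2int.const_mul ((i : ℝ) - 1))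
      · exact (hSint.aestronglyMeasurable.norm.mul hSint.aestronglyMeasurable.norm).congr
          (Filter.Eventually.of_forall fun ω => by simp [Pi.mul_apply, sq])
      · filter_upwards with ω
        rw [Real.norm_eq_abs, abs_of_nonneg (by positivity)]
        exact hSptw ω
    have hi1R : (2 : ℝ) ≤ (i : ℝ) := by exact_mod_cast hi2
    have hS2bound : ∫ ω, ‖S ω‖ ^ 2 ∂P ≤ ((i : ℝ) - 1) ^ 2 * G ^ 2 := by
      calc ∫ ω, ‖S ω‖ ^ 2 ∂P
          ≤ ∫ ω, ((i : ℝ) - 1) * ∑ j ∈ Icc 1 (i - 1), ‖g m j ω‖ ^ 2 ∂P :=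
            integral_mono hS2int (hsum2int.const_mul _) hSptw
        _ = ((i : ℝ) - 1) * ∑ j ∈ Icc 1 (i - 1), ∫ ω, ‖g m j ω‖ ^ 2 ∂P := by
            rw [integral_const_mul, integral_finset_sum _
              (fun j hj => hg2int m j (hsub hj))]
        _ ≤ ((i : ℝ) - 1) * ∑ j ∈ Icc 1 (i - 1), G ^ 2 :=
            mul_le_mul_of_nonneg_left
              (Finset.sum_le_sum (fun j hj => hgbound m j (hsub hj))) (by linarith)
        _ = ((i : ℝ) - 1) ^ 2 * G ^ 2 := by
            rw [Finset.sum_const, nsmul_eq_mul, hcard]; ring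
    -- the drift term
    have hΔ2eq : ∀ ω, ‖θloc m i ω - θh ω‖ ^ 2 = η ^ 2 * ‖S ω‖ ^ 2 := by
      intro ω
      rw [hΔ ω, norm_neg, norm_smul, Real.norm_eq_abs, abs_of_pos hη0, mul_pow]
    have hΔ2int : Integrable (fun ω => ‖θloc m i ω - θh ω‖ ^ 2) P :=
      (hS2int.const_mul (η ^ 2)).congr
        (Filter.Eventually.of_forall fun ω => (hΔ2eq ω).symm)
    set X : ℝ := ∫ ω, ‖θloc m i ω - θh ω‖ ^ 2 ∂P with hX
    have hX0 : 0 ≤ X := integral_nonneg (fun ω => by positivity)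
    have hXbound : X ≤ η ^ 2 * (((i : ℝ) - 1) ^ 2 * G ^ 2) := by
      have hEq : X = η ^ 2 * ∫ ω, ‖S ω‖ ^ 2 ∂P := by
        rw [hX, ← integral_const_mul]
        exact integral_congr_ae (Filter.Eventually.of_forall fun ω => hΔ2eq ω)
      rw [hEq]
      exact mul_le_mul_of_nonneg_left hS2bound (by positivity)
    -- split the inner product
    have h3int : Integrable (fun ω => ⟪θloc m i ω - θh ω, g m i ω⟫_ℝ) P := by
      refine ((hip0int m i hiIcc2).sub (hip1int m i hiIcc2)).congr
        (Filter.Eventually.of_forall fun ω => ?_)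
      show ⟪θstar - θh ω, g m i ω⟫_ℝ - ⟪θstar - θloc m i ω, g m i ω⟫_ℝ = _
      rw [← inner_sub_left]
      congr 1
      abel
    have hsplit : ∫ ω, ⟪θstar - θh ω, g m i ω⟫_ℝ ∂P
        = (∫ ω, ⟪θstar - θloc m i ω, g m i ω⟫_ℝ ∂P)
          + ∫ ω, ⟪θloc m i ω - θh ω, g m i ω⟫_ℝ ∂P := by
      rw [← integral_add (hip1int m i hiIcc2) h3int]
      refine integral_congr_ae (Filter.Eventually.of_forall fun ω => ?_)
      show _ = ⟪θstar - θloc m i ω, g m i ω⟫_ℝ + ⟪θloc m i ω - θh ω, g m i ω⟫_ℝ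
      rw [← inner_add_left]
      congr 1
      abel
    set N : ℝ := ∫ ω, ‖θloc m i ω - θstar‖ ^ 2 ∂P with hN
    -- strong convexity bound
    have hB : ∫ ω, ⟪θstar - θloc m i ω, g m i ω⟫_ℝ ∂P
        ≤ (F m θstar - Fmin m) - μ / 2 * N := by
      rw [hunbiased m i hiIcc2]
      have hub : ∀ ω, ⟪θstar - θloc m i ω, Gm m (θloc m i ω)⟫_ℝ
          ≤ (F m θstar - Fmin m) - μ / 2 * ‖θloc m i ω - θstar‖ ^ 2 := by
        intro ω
        have h1 := hsc m θstar (θloc m i ω)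
        have h2 := hFmin m (θloc m i ω)
        rw [show ‖θloc m i ω - θstar‖ = ‖θstar - θloc m i ω‖ from norm_sub_rev _ _]
        linarith
      calc ∫ ω, ⟪θstar - θloc m i ω, Gm m (θloc m i ω)⟫_ℝ ∂P
          ≤ ∫ ω, ((F m θstar - Fmin m) - μ / 2 * ‖θloc m i ω - θstar‖ ^ 2) ∂P :=
            integral_mono (hip2int m i hiIcc2)
              ((integrable_const _).sub ((hloc2int m i hiIcc2).const_mul _)) hub
        _ = _ := by
            rw [integral_sub (integrable_const _) ((hloc2int m i hiIcc2).const_mul _),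
              integral_const, integral_const_mul, probReal_univ,
              smul_eq_mul, one_mul]
    -- norm decomposition (multiplied through by η to avoid division)
    have hC : η * (1 - η) * D - (1 - η) * X ≤ η * N := by
      have hub : ∀ ω, η * (1 - η) * ‖θh ω - θstar‖ ^ 2
            - (1 - η) * ‖θloc m i ω - θh ω‖ ^ 2
          ≤ η * ‖θloc m i ω - θstar‖ ^ 2 := by
        intro ω
        have hxy : θloc m i ω - θstar = (θh ω - θstar) + (θloc m i ω - θh ω) := by
          abel
        rw [hxy, norm_add_sq_real]
        have hcs : -(‖θh ω - θstar‖ * ‖θloc m i ω - θh ω‖)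
            ≤ ⟪θh ω - θstar, θloc m i ω - θh ω⟫_ℝ :=
          neg_le_of_abs_le (abs_real_inner_le_norm _ _)
        nlinarith [sq_nonneg (η * ‖θh ω - θstar‖ - ‖θloc m i ω - θh ω‖),
          mul_le_mul_of_nonneg_left hcs hη0.le]
      have hlow : Integrable (fun ω =>
          η * (1 - η) * ‖θh ω - θstar‖ ^ 2 - (1 - η) * ‖θloc m i ω - θh ω‖ ^ 2) P :=
        (hθh2int.const_mul _).sub (hΔ2int.const_mul _)
      calc η * (1 - η) * D - (1 - η) * X
          = ∫ ω, (η * (1 - η) * ‖θh ω - θstar‖ ^ 2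
              - (1 - η) * ‖θloc m i ω - θh ω‖ ^ 2) ∂P := by
            rw [integral_sub (hθh2int.const_mul _) (hΔ2int.const_mul _),
              integral_const_mul, integral_const_mul]
        _ ≤ ∫ ω, η * ‖θloc m i ω - θstar‖ ^ 2 ∂P :=
            integral_mono hlow ((hloc2int m i hiIcc2).const_mul _) hub
        _ = η * N := integral_const_mul _ _
    -- AM–GM bound (multiplied through by 2η)
    have hDterm : 2 * η * ∫ ω, ⟪θloc m i ω - θh ω, g m i ω⟫_ℝ ∂P
        ≤ X + η ^ 2 * G ^ 2 := by
      have hub : ∀ ω, 2 * η * ⟪θloc m i ω - θh ω, g m i ω⟫_ℝ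
          ≤ ‖θloc m i ω - θh ω‖ ^ 2 + η ^ 2 * ‖g m i ω‖ ^ 2 := by
        intro ω
        have hcs : ⟪θloc m i ω - θh ω, g m i ω⟫_ℝ ≤ ‖θloc m i ω - θh ω‖ * ‖g m i ω‖ :=
          real_inner_le_norm _ _
        nlinarith [sq_nonneg (‖θloc m i ω - θh ω‖ - η * ‖g m i ω‖),
          mul_le_mul_of_nonneg_left hcs (by positivity : (0:ℝ) ≤ 2 * η)]
      calc 2 * η * ∫ ω, ⟪θloc m i ω - θh ω, g m i ω⟫_ℝ ∂P
          = ∫ ω, 2 * η * ⟪θloc m i ω - θh ω, g m i ω⟫_ℝ ∂P :=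
            (integral_const_mul _ _).symm
        _ ≤ ∫ ω, (‖θloc m i ω - θh ω‖ ^ 2 + η ^ 2 * ‖g m i ω‖ ^ 2) ∂P :=
            integral_mono (h3int.const_mul _)
              (hΔ2int.add ((hg2int m i hiIcc1).const_mul _)) hub
        _ = X + η ^ 2 * ∫ ω, ‖g m i ω‖ ^ 2 ∂P := by
            rw [integral_add hΔ2int ((hg2int m i hiIcc1).const_mul _),
              integral_const_mul]
        _ ≤ X + η ^ 2 * G ^ 2 := by
            have := hgbound m i hiIcc1
            nlinarith [sq_nonneg η]
    -- combine everything
    rw [hsplit]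
    have hμη : 0 ≤ μ * (1 - η) := mul_nonneg hμ.le (by linarith)
    have hBη := mul_le_mul_of_nonneg_left hB (by positivity : (0:ℝ) ≤ 2 * η)
    have hCμ := mul_le_mul_of_nonneg_left hC hμ.le
    have hchain : 2 * η * ((∫ ω, ⟪θstar - θloc m i ω, g m i ω⟫_ℝ ∂P)
          + ∫ ω, ⟪θloc m i ω - θh ω, g m i ω⟫_ℝ ∂P)
        ≤ 2 * η * (F m θstar - Fmin m) - μ * η * (1 - η) * D
          + (1 + μ * (1 - η)) * X + η ^ 2 * G ^ 2 := by
      nlinarith [hBη, hCμ, hDterm]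
    refine hchain.trans ?_
    have hXb := mul_le_mul_of_nonneg_left hXbound (by linarith : (0:ℝ) ≤ 1 + μ * (1 - η))
    linarith
  -- now sum up
  have hcardIcc : (#(Icc 2 τ) : ℝ) = (τ : ℝ) - 1 := by
    rw [Nat.card_Icc]
    have h : τ + 1 - 2 = τ - 1 := by omega
    rw [h, Nat.cast_sub hτ, Nat.cast_one]
  have hsumsq := sumsq_icc τ
  -- per-m bound after summing over i
  have keym : ∀ m, 2 * η * ∑ i ∈ Icc 2 τ, ∫ ω, ⟪θstar - θh ω, g m i ω⟫_ℝ ∂P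
      ≤ ((τ : ℝ) - 1) * (2 * η * (F m θstar - Fmin m) - μ * η * (1 - η) * D)
        + (1 + μ * (1 - η)) * η ^ 2 * G ^ 2
            * ((τ : ℝ) * ((τ : ℝ) - 1) * (2 * (τ : ℝ) - 1) / 6)
        + ((τ : ℝ) - 1) * (η ^ 2 * G ^ 2) := by
    intro m
    rw [Finset.mul_sum]
    calc ∑ i ∈ Icc 2 τ, 2 * η * ∫ ω, ⟪θstar - θh ω, g m i ω⟫_ℝ ∂P
        ≤ ∑ i ∈ Icc 2 τ, (2 * η * (F m θstar - Fmin m) - μ * η * (1 - η) * D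
            + (1 + μ * (1 - η)) * η ^ 2 * ((i : ℝ) - 1) ^ 2 * G ^ 2
            + η ^ 2 * G ^ 2) := Finset.sum_le_sum (key m)
      _ = _ := by
          rw [Finset.sum_add_distrib, Finset.sum_add_distrib, Finset.sum_const,
            nsmul_eq_mul, Finset.sum_const, nsmul_eq_mul, hcardIcc]
          have h : ∑ i ∈ Icc 2 τ, (1 + μ * (1 - η)) * η ^ 2 * ((i : ℝ) - 1) ^ 2 * G ^ 2
              = (1 + μ * (1 - η)) * η ^ 2 * G ^ 2
                  * ((τ : ℝ) * ((τ : ℝ) - 1) * (2 * (τ : ℝ) - 1) / 6) := by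
            rw [← hsumsq, Finset.mul_sum]
            refine Finset.sum_congr rfl fun i _ => by ring
          rw [h]
  -- weighted sum over m
  have hfinal : ∑ m, w m * (2 * η * ∑ i ∈ Icc 2 τ, ∫ ω, ⟪θstar - θh ω, g m i ω⟫_ℝ ∂P)
      ≤ ∑ m, w m * (((τ : ℝ) - 1) * (2 * η * (F m θstar - Fmin m) - μ * η * (1 - η) * D)
          + (1 + μ * (1 - η)) * η ^ 2 * G ^ 2
              * ((τ : ℝ) * ((τ : ℝ) - 1) * (2 * (τ : ℝ) - 1) / 6)
          + ((τ : ℝ) - 1) * (η ^ 2 * G ^ 2)) :=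
    Finset.sum_le_sum (fun m _ => mul_le_mul_of_nonneg_left (keym m) (hw m))
  have hlhs : 2 * η * ∑ m, w m * ∑ i ∈ Icc 2 τ, ∫ ω, ⟪θstar - θh ω, g m i ω⟫_ℝ ∂P
      = ∑ m, w m * (2 * η * ∑ i ∈ Icc 2 τ, ∫ ω, ⟪θstar - θh ω, g m i ω⟫_ℝ ∂P) := by
    rw [Finset.mul_sum]
    refine Finset.sum_congr rfl fun m _ => by ring
  rw [hlhs]
  refine hfinal.trans ?_
  have hrhs : ∑ m, w m * (((τ : ℝ) - 1) * (2 * η * (F m θstar - Fmin m) - μ * η * (1 - η) * D)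
        + (1 + μ * (1 - η)) * η ^ 2 * G ^ 2
            * ((τ : ℝ) * ((τ : ℝ) - 1) * (2 * (τ : ℝ) - 1) / 6)
        + ((τ : ℝ) - 1) * (η ^ 2 * G ^ 2))
      = 2 * η * ((τ : ℝ) - 1) * Γ - μ * η * (1 - η) * ((τ : ℝ) - 1) * D
        + (1 + μ * (1 - η)) * η ^ 2 * G ^ 2
            * ((τ : ℝ) * ((τ : ℝ) - 1) * (2 * (τ : ℝ) - 1) / 6)
        + ((τ : ℝ) - 1) * (η ^ 2 * G ^ 2) := by
    have expand : ∀ m : Fin M,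
        w m * (((τ : ℝ) - 1) * (2 * η * (F m θstar - Fmin m) - μ * η * (1 - η) * D)
          + (1 + μ * (1 - η)) * η ^ 2 * G ^ 2
              * ((τ : ℝ) * ((τ : ℝ) - 1) * (2 * (τ : ℝ) - 1) / 6)
          + ((τ : ℝ) - 1) * (η ^ 2 * G ^ 2))
        = 2 * η * ((τ : ℝ) - 1) * (w m * F m θstar)
            - 2 * η * ((τ : ℝ) - 1) * (w m * Fmin m)
          + w m * (-(μ * η * (1 - η) * ((τ : ℝ) - 1) * D)
              + (1 + μ * (1 - η)) * η ^ 2 * G ^ 2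
                  * ((τ : ℝ) * ((τ : ℝ) - 1) * (2 * (τ : ℝ) - 1) / 6)
              + ((τ : ℝ) - 1) * (η ^ 2 * G ^ 2)) := by
      intro m; ring
    rw [Finset.sum_congr rfl (fun m _ => expand m)]
    rw [Finset.sum_add_distrib, Finset.sum_sub_distrib, ← Finset.mul_sum, ← Finset.mul_sum,
      ← Finset.sum_mul, hw1, ← hFstar, hΓ]
    ring
  rw [hrhs]
  linarith
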